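/- arXiv:2605.15457 — 3 statements merged into one kernel-verified Lean document; each statement's English description precedes it below -/
import Mathlib

section
/- Let A = (a,0), B = (b,0) with -1 < b < 0 < a < 1, let k > 0 with k ≠ 1, and let P = (x,y) lie in the open unit disk with P ≠ A and P ≠ B. Then sinh(d_H(A,P)) = k·sinh(d_H(B,P)) if and only if (x-a)²/(1-a²) - k²·(x-b)²/(1-b²) + (1-k²)·y² = 0, where d_H is the Beltrami–Klein hyperbolic distance. -/
open Real

/-- Klein model: the generalized Apollonius condition sinh(d_H(A,P)) = k·sinh(d_H(B,P))
is equivalent to the quadratic equation. -/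
theorem stmt5 (a b k x y : ℝ)
    (hb : -1 < b) (hb0 : b < 0) (ha0 : 0 < a) (ha : a < 1)
    (hk : 0 < k) (hk1 : k ≠ 1)
    (hP : x ^ 2 + y ^ 2 < 1)
    (hPA : (x, y) ≠ (a, 0)) (hPB : (x, y) ≠ (b, 0))
    (dA dB : ℝ) (hdA0 : 0 ≤ dA) (hdB0 : 0 ≤ dB)
    (hdA : Real.cosh dA =
      (1 - a * x) / Real.sqrt ((1 - a ^ 2) * (1 - (x ^ 2 + y ^ 2))))
    (hdB : Real.cosh dB =
      (1 - b * x) / Real.sqrt ((1 - b ^ 2) * (1 - (x ^ 2 + y ^ 2)))) :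
    Real.sinh dA = k * Real.sinh dB ↔
      (x - a) ^ 2 / (1 - a ^ 2) - k ^ 2 * ((x - b) ^ 2 / (1 - b ^ 2))
        + (1 - k ^ 2) * y ^ 2 = 0 := by
  have hs0 : 0 < 1 - (x ^ 2 + y ^ 2) := by linarith
  have hpA : 0 < 1 - a ^ 2 := by nlinarith
  have hpB : 0 < 1 - b ^ 2 := by nlinarith
  have hAs : 0 < (1 - a ^ 2) * (1 - (x ^ 2 + y ^ 2)) := mul_pos hpA hs0
  have hBs : 0 < (1 - b ^ 2) * (1 - (x ^ 2 + y ^ 2)) := mul_pos hpB hs0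
  have hsinA : Real.sinh dA ^ 2 =
      ((x - a) ^ 2 + (1 - a ^ 2) * y ^ 2) / ((1 - a ^ 2) * (1 - (x ^ 2 + y ^ 2))) := by
    rw [Real.sinh_sq, hdA, div_pow, Real.sq_sqrt hAs.le]
    field_simp
    ring
  have hsinB : Real.sinh dB ^ 2 =
      ((x - b) ^ 2 + (1 - b ^ 2) * y ^ 2) / ((1 - b ^ 2) * (1 - (x ^ 2 + y ^ 2))) := by
    rw [Real.sinh_sq, hdB, div_pow, Real.sq_sqrt hBs.le]
    field_simp
    ring
  have hA0 : 0 ≤ Real.sinh dA := Real.sinh_nonneg_iff.mpr hdA0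
  have hB0 : 0 ≤ Real.sinh dB := Real.sinh_nonneg_iff.mpr hdB0
  have key : Real.sinh dA ^ 2 = k ^ 2 * Real.sinh dB ^ 2 ↔
      (x - a) ^ 2 / (1 - a ^ 2) - k ^ 2 * ((x - b) ^ 2 / (1 - b ^ 2))
        + (1 - k ^ 2) * y ^ 2 = 0 := by
    rw [hsinA, hsinB, ← mul_div_assoc, div_eq_div_iff hAs.ne' hBs.ne']
    constructor
    · intro h
      have h2 : (1 - (x ^ 2 + y ^ 2)) *
          ((x - a) ^ 2 * (1 - b ^ 2) - k ^ 2 * (x - b) ^ 2 * (1 - a ^ 2)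
            + (1 - k ^ 2) * y ^ 2 * ((1 - a ^ 2) * (1 - b ^ 2))) = 0 := by
        linear_combination h
      have h3 := (mul_eq_zero.mp h2).resolve_left hs0.ne'
      field_simp
      linear_combination h3
    · intro h
      field_simp at h
      linear_combination (1 - (x ^ 2 + y ^ 2)) * h
  constructor
  · intro h
    exact key.mp (by rw [h]; ring)
  · intro h
    have h2 : Real.sinh dA ^ 2 = (k * Real.sinh dB) ^ 2 := by
      rw [key.mpr h]; ring
    rw [← Real.sqrt_sq hA0, ← Real.sqrt_sq (mul_nonneg hk.le hB0), h2]
end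

section
/- Let A = (a,0), B = (b,0) be points of the gnomonic model of the elliptic plane, let k > 0 with k ≠ 1, and let P = (x,y) ∈ ℝ² with P ≠ A, P ≠ B. Then sin(d_E(A,P)) = k·sin(d_E(B,P)) if and only if (x-a)²/(1+a²) - k²·(x-b)²/(1+b²) + (1-k²)·y² = 0. -/
open Real

lemma sinsq_aux (a x y d : ℝ) (hd0 : 0 ≤ d) (hd1 : d ≤ π / 2)
    (hd : Real.cos d = (1 + a * x) / Real.sqrt ((1 + a ^ 2) * (1 + (x ^ 2 + y ^ 2)))) :
    Real.sin d ^ 2 = ((x - a) ^ 2 + (1 + a ^ 2) * y ^ 2) /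
      ((1 + a ^ 2) * (1 + (x ^ 2 + y ^ 2))) := by
  have ha : (0:ℝ) < 1 + a ^ 2 := by positivity
  have hS : (0:ℝ) < 1 + (x ^ 2 + y ^ 2) := by positivity
  have hD : (0:ℝ) < (1 + a ^ 2) * (1 + (x ^ 2 + y ^ 2)) := by positivity
  have h1 : Real.sin d ^ 2 = 1 - Real.cos d ^ 2 := by
    have := Real.sin_sq_add_cos_sq d
    linarith
  rw [h1, hd, div_pow, Real.sq_sqrt hD.le]
  field_simp
  ring

/-- Gnomonic model: the generalized Apollonius condition sin(d_E(A,P)) = k·sin(d_E(B,P))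
is equivalent to the quadratic equation. -/
theorem stmt6 (a b k x y : ℝ)
    (hk : 0 < k) (hk1 : k ≠ 1)
    (hPA : (x, y) ≠ (a, 0)) (hPB : (x, y) ≠ (b, 0))
    (dA dB : ℝ) (hdA0 : 0 ≤ dA) (hdA1 : dA ≤ π / 2) (hdB0 : 0 ≤ dB) (hdB1 : dB ≤ π / 2)
    (hdA : Real.cos dA =
      (1 + a * x) / Real.sqrt ((1 + a ^ 2) * (1 + (x ^ 2 + y ^ 2))))
    (hdB : Real.cos dB =
      (1 + b * x) / Real.sqrt ((1 + b ^ 2) * (1 + (x ^ 2 + y ^ 2)))) :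
    Real.sin dA = k * Real.sin dB ↔
      (x - a) ^ 2 / (1 + a ^ 2) - k ^ 2 * ((x - b) ^ 2 / (1 + b ^ 2))
        + (1 - k ^ 2) * y ^ 2 = 0 := by
  have hpi := Real.pi_pos
  have hsA : 0 ≤ Real.sin dA := Real.sin_nonneg_of_nonneg_of_le_pi hdA0 (by linarith)
  have hsB : 0 ≤ Real.sin dB := Real.sin_nonneg_of_nonneg_of_le_pi hdB0 (by linarith)
  have hA2 := sinsq_aux a x y dA hdA0 hdA1 hdA
  have hB2 := sinsq_aux b x y dB hdB0 hdB1 hdB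
  have ha : (0:ℝ) < 1 + a ^ 2 := by positivity
  have hb : (0:ℝ) < 1 + b ^ 2 := by positivity
  have hS : (0:ℝ) < 1 + (x ^ 2 + y ^ 2) := by positivity
  have step1 : Real.sin dA = k * Real.sin dB ↔
      Real.sin dA ^ 2 = (k * Real.sin dB) ^ 2 := by
    constructor
    · intro h; rw [h]
    · intro h
      nlinarith [h, hsA, hsB, mul_nonneg hk.le hsB]
  have key : ((x - a) ^ 2 + (1 + a ^ 2) * y ^ 2) / ((1 + a ^ 2) * (1 + (x ^ 2 + y ^ 2)))
      - k ^ 2 * (((x - b) ^ 2 + (1 + b ^ 2) * y ^ 2) / ((1 + b ^ 2) * (1 + (x ^ 2 + y ^ 2))))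
      = ((x - a) ^ 2 / (1 + a ^ 2) - k ^ 2 * ((x - b) ^ 2 / (1 + b ^ 2))
        + (1 - k ^ 2) * y ^ 2) / (1 + (x ^ 2 + y ^ 2)) := by
    field_simp
    ring
  rw [step1, mul_pow, hA2, hB2, ← sub_eq_zero, key, div_eq_zero_iff,
    or_iff_left hS.ne']
end

section
/- Let d > 0, k > 0, k ≠ 1, a = k·sinh(d)/(1 + k·cosh(d)), b = -sinh(d)/(cosh(d) + k). Then the coefficient identity (a(1 - b²) - k²·b(1 - a²))/((1-k²)(1-a²)(1-b²)) = k·sinh(d)/(1 - k²) holds; consequently the generalized Apollonius curve equation x² - 2·[(a(1-b²) - k²b(1-a²))/((1-k²)(1-a²)(1-b²))]·x + y² = 0 is equivalent to x² - (2k·sinh(d)/(1-k²))·x + y² = 0. -/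
open Real

/-- Hyperbolic coefficient identity and the resulting equivalence of the two forms
of the generalized Apollonius curve equation. -/
theorem stmt8 (d k : ℝ) (hd : 0 < d) (hk : 0 < k) (hk1 : k ≠ 1)
    (a b : ℝ)
    (ha : a = k * Real.sinh d / (1 + k * Real.cosh d))
    (hb : b = -(Real.sinh d / (Real.cosh d + k))) :
    (a * (1 - b ^ 2) - k ^ 2 * b * (1 - a ^ 2)) /
        ((1 - k ^ 2) * (1 - a ^ 2) * (1 - b ^ 2)) = k * Real.sinh d / (1 - k ^ 2) ∧
    ∀ x y : ℝ,
      (x ^ 2 - 2 * ((a * (1 - b ^ 2) - k ^ 2 * b * (1 - a ^ 2)) /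
          ((1 - k ^ 2) * (1 - a ^ 2) * (1 - b ^ 2))) * x + y ^ 2 = 0 ↔
       x ^ 2 - 2 * k * Real.sinh d / (1 - k ^ 2) * x + y ^ 2 = 0) := by
  have hc1 : 1 ≤ Real.cosh d := Real.one_le_cosh d
  have hsq : Real.cosh d ^ 2 = 1 + Real.sinh d ^ 2 := by
    rw [Real.cosh_sq]; ring
  have h1 : (1 + k * Real.cosh d) ≠ 0 := by positivity
  have h2 : (Real.cosh d + k) ≠ 0 := by positivity
  have hk2 : 1 - k ^ 2 ≠ 0 := by
    intro h
    have hk' : k = 1 := by nlinarith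
    exact hk1 hk' 
  have ha2 : 1 - a ^ 2 = (1 + 2 * k * Real.cosh d + k ^ 2) / (1 + k * Real.cosh d) ^ 2 := by
    rw [ha]; field_simp; nlinarith [hsq]
  have hb2 : 1 - b ^ 2 = (1 + 2 * k * Real.cosh d + k ^ 2) / (Real.cosh d + k) ^ 2 := by
    rw [hb]; field_simp; nlinarith [hsq]
  have hpos : (0:ℝ) < 1 + 2 * k * Real.cosh d + k ^ 2 := by positivity
  have key : (a * (1 - b ^ 2) - k ^ 2 * b * (1 - a ^ 2)) /
      ((1 - k ^ 2) * (1 - a ^ 2) * (1 - b ^ 2)) = k * Real.sinh d / (1 - k ^ 2) := by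
    rw [ha2, hb2, ha, hb]
    field_simp
    nlinarith [hsq, sq_nonneg (Real.sinh d)]
  refine ⟨key, fun x y => ?_⟩
  rw [key]
  have h2' : 2 * (k * Real.sinh d / (1 - k ^ 2)) = 2 * k * Real.sinh d / (1 - k ^ 2) := by ring
  rw [h2']
end
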